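/- Let ρ₁, ρ₂, κ₁, κ₂ > 0 and κ₃ ∈ ℝ with κ₃² ≤ κ₁κ₂, and set κ = √(κ₁κ₂ − κ₃²), ρ₃ = (ρ₁+ρ₂)/2, α = (ρ₂−ρ₁)/(ρ₂+ρ₁). Define ω ∈ ℂ by: ω = ((2κ)^{1+α}/(κ₂ρ₃^α))·(Γ(−α)/Γ(1+α))·Γ(1 + (α/2)(1 + iκ₃/κ)) / Γ(−(α/2)(1 − iκ₃/κ)) if ρ₁ ≠ ρ₂ and κ > 0; ω = ((iακ₃)^{1+α}/(κ₂ρ₃^α))·Γ(−α)/Γ(1+α) if ρ₁ ≠ ρ₂ and κ = 0; and ω = (κ − iκ₃)/κ₂ if ρ₁ = ρ₂. Then: if ρ₁ ≠ ρ₂ and κ > 0, arg ω = −arctan[ tan((π/2)(1−|α|)) · tanh( π|α|κ₃/(2κ) ) ]; if ρ₁ = ρ₂ and κ > 0, arg ω = −arctan(κ₃/κ); and if ρ₁ = ρ₂ and κ = 0, arg ω = −sgn(κ₃)·(π/2)(1−|α|). -/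

import Mathlib

open Real
noncomputable section

lemma arg_of_re_pos' {z : ℂ} (h : 0 < z.re) :
    Complex.arg z = Real.arctan (z.im / z.re) := by
  rw [← Complex.tan_arg, Real.arctan_tan]
  · exact Complex.neg_pi_div_two_lt_arg_iff.2 (Or.inl h)
  · exact Complex.arg_lt_pi_div_two_iff.2 (Or.inl h)

set_option maxHeartbeats 2000000 in
lemma part1core (κ κ₂ κ₃ ρ₃ α : ℝ) (hk : 0 < κ) (hκ₂ : 0 < κ₂) (hρ₃ : 0 < ρ₃)
    (hα0 : α ≠ 0) (hα1 : |α| < 1) :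
    Complex.arg (
      ((((2 * κ) ^ (1 + α) : ℝ) / (κ₂ * (ρ₃ ^ α : ℝ)) : ℝ) : ℂ) *
        (Complex.Gamma (-(α : ℂ)) / Complex.Gamma (1 + (α : ℂ))) *
        (Complex.Gamma (1 + ((α : ℂ) / 2) * (1 + Complex.I * (κ₃ : ℂ) / (κ : ℂ))) /
          Complex.Gamma (-((α : ℂ) / 2) * (1 - Complex.I * (κ₃ : ℂ) / (κ : ℂ))))) =
      -Real.arctan (Real.tan (π / 2 * (1 - |α|)) * Real.tanh (π * |α| * κ₃ / (2 * κ))) := by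
  have hκne : (κ : ℂ) ≠ 0 := by exact_mod_cast hk.ne'
  set z : ℂ := ((α : ℂ) / 2) * (1 + Complex.I * (κ₃ : ℂ) / (κ : ℂ)) with hzdef
  have hz : z = ((α / 2 : ℝ) : ℂ) + ((α * κ₃ / (2 * κ) : ℝ) : ℂ) * Complex.I := by
    rw [hzdef]; push_cast; field_simp
  have hzre : z.re = α / 2 := by
    rw [hz]; simp only [Complex.add_re, Complex.ofReal_re, Complex.mul_re, Complex.I_re,
      Complex.I_im, Complex.ofReal_im]; ring
  have hzim : z.im = α * κ₃ / (2 * κ) := by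
    rw [hz]; simp only [Complex.add_im, Complex.ofReal_im, Complex.mul_im, Complex.I_re,
      Complex.I_im, Complex.ofReal_re]; ring
  have hz0 : z ≠ 0 := by
    intro h
    apply hα0
    have := congrArg Complex.re h
    rw [hzre] at this
    simpa using this
  have hconj : -((α : ℂ) / 2) * (1 - Complex.I * (κ₃ : ℂ) / (κ : ℂ))
      = (starRingEnd ℂ) (-z) := by
    rw [map_neg, hz]
    simp only [map_add, map_mul, Complex.conj_ofReal, Complex.conj_I]
    push_cast
    field_simp
    ring
  have hGconj : Complex.Gamma (-((α : ℂ) / 2) * (1 - Complex.I * (κ₃ : ℂ) / (κ : ℂ)))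
      = (starRingEnd ℂ) (Complex.Gamma (-z)) := by
    rw [hconj, Complex.Gamma_conj]
  have hg0 : Complex.Gamma (-z) ≠ 0 := by
    apply Complex.Gamma_ne_zero
    intro m h
    have h2 := congrArg Complex.re h
    simp only [Complex.neg_re, hzre, Complex.natCast_re] at h2
    have hm : (m : ℝ) = α / 2 := by linarith
    have habs : |α| / 2 < 1 / 2 := by linarith
    rcases abs_lt.1 hα1 with ⟨h3, h4⟩
    have : (m : ℝ) < 1 := by rw [hm]; linarith
    have hm0 : m = 0 := by exact_mod_cast Nat.lt_one_iff.1 (by exact_mod_cast this)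
    rw [hm0] at hm
    simp at hm
    exact hα0 (by linarith)
  have h1 : Complex.Gamma (1 + z) = z * Complex.Gamma z := by
    rw [add_comm]; exact Complex.Gamma_add_one z hz0
  have h2 : Complex.Gamma (1 - z) = -z * Complex.Gamma (-z) := by
    rw [show (1:ℂ) - z = -z + 1 by ring]
    exact Complex.Gamma_add_one (-z) (neg_ne_zero.2 hz0)
  have key : Complex.Gamma (1 + z) * Complex.Gamma (-z)
      = -((π : ℂ) / Complex.sin ((π : ℂ) * z)) := by
    rw [h1, ← Complex.Gamma_mul_Gamma_one_sub z, h2]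
    ring
  set a : ℝ := π * α / 2 with ha
  set b : ℝ := π * α * κ₃ / (2 * κ) with hb
  have hpz : (π : ℂ) * z = ((a : ℝ) : ℂ) + ((b : ℝ) : ℂ) * Complex.I := by
    rw [hz, ha, hb]; push_cast; field_simp
  set S : ℂ := Complex.sin ((π : ℂ) * z) with hSdef
  have hS : S = ((Real.sin a * Real.cosh b : ℝ) : ℂ)
      + ((Real.cos a * Real.sinh b : ℝ) : ℂ) * Complex.I := by
    rw [hSdef, hpz, Complex.sin_add, Complex.cos_mul_I, Complex.sin_mul_I]
    push_cast
    ring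
  have hSre : S.re = Real.sin a * Real.cosh b := by
    rw [hS]; simp only [Complex.add_re, Complex.ofReal_re, Complex.mul_re, Complex.I_re,
      Complex.I_im, Complex.ofReal_im]; ring
  have hSim : S.im = Real.cos a * Real.sinh b := by
    rw [hS]; simp only [Complex.add_im, Complex.ofReal_im, Complex.mul_im, Complex.I_re,
      Complex.I_im, Complex.ofReal_re]; ring
  -- nonvanishing of sin a with sign
  have hpi := Real.pi_pos
  rcases abs_lt.1 hα1 with ⟨hαl, hαu⟩
  have hsin : 0 < α * Real.sin a := by
    rcases hα0.lt_or_gt with h | h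
    · have h1 : 0 < -a := by rw [ha]; nlinarith
      have h2 : -a < π := by rw [ha]; nlinarith
      have h3 := Real.sin_pos_of_pos_of_lt_pi h1 h2
      rw [Real.sin_neg] at h3
      nlinarith
    · have h1 : 0 < a := by rw [ha]; nlinarith
      have h2 : a < π := by rw [ha]; nlinarith
      have h3 := Real.sin_pos_of_pos_of_lt_pi h1 h2
      nlinarith
  have hsina0 : Real.sin a ≠ 0 := by
    intro h; rw [h, mul_zero] at hsin; exact lt_irrefl 0 hsin
  have hS0 : S ≠ 0 := by
    intro h
    rw [h] at hSre
    have : Real.sin a = 0 := by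
      have := (Real.cosh_pos b).ne'
      simpa [this] using hSre.symm
    exact hsina0 this
  -- constants
  set C : ℝ := (2 * κ) ^ (1 + α) / (κ₂ * ρ₃ ^ α) with hCdef
  have hCpos : 0 < C := by
    rw [hCdef]
    have h1 : 0 < (2 * κ) ^ (1 + α) := Real.rpow_pos_of_pos (by linarith) _
    have h2 : 0 < ρ₃ ^ α := Real.rpow_pos_of_pos hρ₃ _
    positivity
  set r₁ : ℝ := Real.Gamma (-α) with hr₁def
  set r₂ : ℝ := Real.Gamma (1 + α) with hr₂def
  have hr₂pos : 0 < r₂ := Real.Gamma_pos_of_pos (by linarith)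
  have hg2 : Real.Gamma (1 - α) = -α * r₁ := by
    rw [show (1:ℝ) - α = -α + 1 by ring]
    exact Real.Gamma_add_one (neg_ne_zero.2 hα0)
  have hg2pos : 0 < Real.Gamma (1 - α) := Real.Gamma_pos_of_pos (by linarith)
  have hr₁sign : α * r₁ < 0 := by
    rw [hg2, neg_mul] at hg2pos; linarith
  set nG : ℝ := Complex.normSq (Complex.Gamma (-z)) with hnGdef
  have hnGpos : 0 < nG := Complex.normSq_pos.2 hg0
  set m : ℝ := -(C * (r₁ / r₂) * π) / nG with hmdef
  have hm : 0 < α * m := by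
    rw [hmdef]
    rw [div_eq_mul_inv]
    have : α * (-(C * (r₁ / r₂) * π) * nG⁻¹) = (-(α * r₁)) * C * π * (r₂⁻¹ * nG⁻¹) := by
      field_simp
    rw [mul_comm α _] at this
    rw [mul_comm _ α] at this
    rw [this]
    have h1 : 0 < -(α * r₁) := by linarith
    positivity
  have hm0 : m ≠ 0 := by
    intro h; rw [h, mul_zero] at hm; exact lt_irrefl 0 hm
  -- rewrite omega
  have hcc : (starRingEnd ℂ) (Complex.Gamma (-z)) * Complex.Gamma (-z) = ((nG : ℝ) : ℂ) := by
    rw [mul_comm, Complex.mul_conj, hnGdef]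
  have hconjg0 : (starRingEnd ℂ) (Complex.Gamma (-z)) ≠ 0 := by
    simpa using hg0
  have e1 : Complex.Gamma (-(α : ℂ)) = ((r₁ : ℝ) : ℂ) := by
    rw [show -(α:ℂ) = ((-α : ℝ) : ℂ) by push_cast; ring, Complex.Gamma_ofReal, hr₁def]
  have e2 : Complex.Gamma (1 + (α : ℂ)) = ((r₂ : ℝ) : ℂ) := by
    rw [show 1 + (α:ℂ) = ((1 + α : ℝ) : ℂ) by push_cast; ring, Complex.Gamma_ofReal, hr₂def]
  have hnGc : ((nG : ℝ) : ℂ) ≠ 0 := by exact_mod_cast hnGpos.ne'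
  have hr₂c : ((r₂ : ℝ) : ℂ) ≠ 0 := by exact_mod_cast hr₂pos.ne'
  have hfrac : Complex.Gamma (1 + z) / (starRingEnd ℂ) (Complex.Gamma (-z))
      = (-((π : ℂ) / S)) / ((nG : ℝ) : ℂ) := by
    rw [div_eq_div_iff hconjg0 hnGc, ← key, ← hcc]
    ring
  have hωeq : (((C : ℝ) : ℂ)) *
        (Complex.Gamma (-(α : ℂ)) / Complex.Gamma (1 + (α : ℂ))) *
        (Complex.Gamma (1 + z) /
          Complex.Gamma (-((α : ℂ) / 2) * (1 - Complex.I * (κ₃ : ℂ) / (κ : ℂ))))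
      = ((m : ℝ) : ℂ) * S⁻¹ := by
    rw [e1, e2, hGconj, hfrac, hmdef]
    push_cast
    field_simp
  rw [hωeq]
  have hre : ((((m : ℝ) : ℂ)) * S⁻¹).re = m * S.re / Complex.normSq S := by
    rw [Complex.mul_re, Complex.inv_re, Complex.inv_im]
    simp [Complex.ofReal_re, Complex.ofReal_im]
    ring
  have him : ((((m : ℝ) : ℂ)) * S⁻¹).im = -(m * S.im) / Complex.normSq S := by
    rw [Complex.mul_im, Complex.inv_re, Complex.inv_im]
    simp [Complex.ofReal_re, Complex.ofReal_im]
    ring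
  have hnS : 0 < Complex.normSq S := Complex.normSq_pos.2 hS0
  have hα2 : 0 < α ^ 2 := by positivity
  have hms : 0 < m * Real.sin a := by nlinarith [mul_pos hm hsin]
  have hrepos : 0 < ((((m : ℝ) : ℂ)) * S⁻¹).re := by
    rw [hre, hSre, show m * (Real.sin a * Real.cosh b) = m * Real.sin a * Real.cosh b by ring]
    exact div_pos (mul_pos hms (Real.cosh_pos b)) hnS
  rw [arg_of_re_pos' hrepos, hre, him, hSre, hSim]
  have hq : -(m * (Real.cos a * Real.sinh b)) / Complex.normSq S /
        (m * (Real.sin a * Real.cosh b) / Complex.normSq S)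
      = -((Real.cos a / Real.sin a) * (Real.sinh b / Real.cosh b)) := by
    rw [div_div_div_eq]
    field_simp
  rw [hq, Real.arctan_neg, neg_inj]
  congr 1
  have htan : Real.tan (π / 2 * (1 - |α|)) = Real.cos (π * |α| / 2) / Real.sin (π * |α| / 2) := by
    rw [show π / 2 * (1 - |α|) = π / 2 - π * |α| / 2 by ring, Real.tan_pi_div_two_sub,
      Real.tan_eq_sin_div_cos, inv_div]
  rw [htan, Real.tanh_eq_sinh_div_cosh]
  rcases hα0.lt_or_gt with h | h
  · rw [abs_of_neg h,
      show π * -α / 2 = -a by rw [ha]; ring,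
      show π * -α * κ₃ / (2 * κ) = -b by rw [hb]; ring,
      Real.cos_neg, Real.sin_neg, Real.sinh_neg, Real.cosh_neg, div_neg, neg_div, neg_mul_neg]
  · rw [abs_of_pos h, ha, hb]

theorem stmt14 (ρ₁ ρ₂ κ₁ κ₂ κ₃ : ℝ)
    (hρ₁ : 0 < ρ₁) (hρ₂ : 0 < ρ₂) (hκ₁ : 0 < κ₁) (hκ₂ : 0 < κ₂)
    (hκ₃ : κ₃ ^ 2 ≤ κ₁ * κ₂)
    (κ ρ₃ α : ℝ)
    (hκ : κ = Real.sqrt (κ₁ * κ₂ - κ₃ ^ 2))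
    (hρ₃ : ρ₃ = (ρ₁ + ρ₂) / 2)
    (hα : α = (ρ₂ - ρ₁) / (ρ₂ + ρ₁))
    (ω : ℂ)
    (hω₁ : ρ₁ ≠ ρ₂ → 0 < κ → ω =
      ((((2 * κ) ^ (1 + α) : ℝ) / (κ₂ * (ρ₃ ^ α : ℝ)) : ℝ) : ℂ) *
        (Complex.Gamma (-(α : ℂ)) / Complex.Gamma (1 + (α : ℂ))) *
        (Complex.Gamma (1 + ((α : ℂ) / 2) * (1 + Complex.I * (κ₃ : ℂ) / (κ : ℂ))) /
          Complex.Gamma (-((α : ℂ) / 2) * (1 - Complex.I * (κ₃ : ℂ) / (κ : ℂ)))))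
    (hω₂ : ρ₁ ≠ ρ₂ → κ = 0 → ω =
      (Complex.I * (α : ℂ) * (κ₃ : ℂ)) ^ ((1 : ℂ) + (α : ℂ)) /
        ((κ₂ : ℂ) * ((ρ₃ ^ α : ℝ) : ℂ)) *
        (Complex.Gamma (-(α : ℂ)) / Complex.Gamma (1 + (α : ℂ))))
    (hω₃ : ρ₁ = ρ₂ → ω = ((κ : ℂ) - Complex.I * (κ₃ : ℂ)) / (κ₂ : ℂ)) :
    (ρ₁ ≠ ρ₂ → 0 < κ →
        Complex.arg ω =
          -Real.arctan (Real.tan (π / 2 * (1 - |α|)) *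
            Real.tanh (π * |α| * κ₃ / (2 * κ)))) ∧
    (ρ₁ = ρ₂ → 0 < κ → Complex.arg ω = -Real.arctan (κ₃ / κ)) ∧
    (ρ₁ = ρ₂ → κ = 0 →
        Complex.arg ω = -Real.sign κ₃ * (π / 2) * (1 - |α|)) := by
  have hsum : 0 < ρ₂ + ρ₁ := by linarith
  refine ⟨fun hne hk => ?_, fun he hk => ?_, fun he hk0 => ?_⟩
  · have hα0 : α ≠ 0 := by
      rw [hα]
      exact div_ne_zero (sub_ne_zero.2 fun h => hne (h.symm)) hsum.ne'
    have hα1 : |α| < 1 :=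
      abs_lt.2 ⟨by rw [hα, lt_div_iff₀ hsum]; linarith, by rw [hα, div_lt_one hsum]; linarith⟩
    rw [hω₁ hne hk]
    exact part1core κ κ₂ κ₃ ρ₃ α hk hκ₂ (by rw [hρ₃]; linarith) hα0 hα1
  · rw [hω₃ he]
    have h1 : ((κ : ℂ) - Complex.I * (κ₃ : ℂ)) / (κ₂ : ℂ)
        = ((κ₂⁻¹ : ℝ) : ℂ) * ((κ : ℂ) - Complex.I * (κ₃ : ℂ)) := by
      push_cast; ring
    rw [h1, Complex.arg_real_mul _ (by positivity), arg_of_re_pos' (by simp [hk])]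
    simp [div_eq_mul_inv, neg_mul, Real.arctan_neg]
  · have hα0 : α = 0 := by rw [hα, he]; simp
    have hgoal : Complex.arg ((((0:ℝ) : ℂ)) - Complex.I * (κ₃ : ℂ)) / (κ₂ : ℂ) = 0 → True := fun _ => trivial
    rw [hω₃ he, hk0, hα0]
    simp only [Complex.ofReal_zero]
    rcases lt_trichotomy κ₃ 0 with h | h | h
    · have h1 : (((0:ℝ) : ℂ) - Complex.I * (κ₃ : ℂ)) / (κ₂ : ℂ)
          = ((-κ₃ / κ₂ : ℝ) : ℂ) * Complex.I := by push_cast; ring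
      rw [show ((0:ℝ):ℂ) = (0:ℂ) by norm_num] at h1
      rw [h1, Complex.arg_real_mul _ (div_pos (neg_pos.2 h) hκ₂), Complex.arg_I,
        Real.sign_of_neg h]
      simp
    · simp [h]
    · have h1 : (((0:ℝ) : ℂ) - Complex.I * (κ₃ : ℂ)) / (κ₂ : ℂ)
          = ((κ₃ / κ₂ : ℝ) : ℂ) * (-Complex.I) := by push_cast; ring
      rw [show ((0:ℝ):ℂ) = (0:ℂ) by norm_num] at h1
      rw [h1, Complex.arg_real_mul _ (div_pos h hκ₂), Complex.arg_neg_I,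
        Real.sign_of_pos h]
      simp
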